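/- The base group A_n = ⊕_ℤ(ℤ/pℤ)^n is a weakly maximal subgroup of L_n = (ℤ/pℤ)^n ≀ ℤ: it has infinite index, and every subgroup of L_n properly containing A_n has finite index in L_n. -/

import Mathlib

open Finsupp Multiplicative

/-- The base group of the lamplighter group `L_n = (ℤ/pℤ)^n ≀ ℤ`: `⊕_ℤ (ℤ/pℤ)^n`. -/
abbrev LampBase (p n : ℕ) := ℤ →₀ (Fin n → ZMod p)

/-- The shift `x^s` on the base group. -/
def lampShift (p n : ℕ) (s : ℤ) : LampBase p n ≃+ LampBase p n :=
  Finsupp.domCongr (Equiv.addRight s)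

/-- The shift action of `ℤ` on the (multiplicative) base group. -/
noncomputable def lampAct (p n : ℕ) :
    Multiplicative ℤ →* MulAut (Multiplicative (LampBase p n)) where
  toFun s := AddEquiv.toMultiplicative (lampShift p n s.toAdd)
  map_one' := by
    ext w
    simp [lampShift, Finsupp.domCongr_apply]
    rfl
  map_mul' s t := by
    ext w
    simp [lampShift, Finsupp.domCongr_apply, MulAut.mul_def, MulEquiv.trans_apply]
    simp [Finsupp.equivMapDomain_apply, Equiv.Perm.mul_def]
    ring_nf

/-- The lamplighter group `L_n = (ℤ/pℤ)^n ≀ ℤ`, realized as the semidirect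
product of the base group `⊕_ℤ (ℤ/pℤ)^n` with `ℤ` acting by the shift. -/
abbrev Lamp (p n : ℕ) :=
  SemidirectProduct (Multiplicative (LampBase p n)) (Multiplicative ℤ) (lampAct p n)

/-- The base group `A_n` is weakly maximal in `L_n`: it has infinite index,
and every subgroup properly containing it has finite index. -/
theorem stmt_18 (p n : ℕ) [Fact p.Prime] (hn : 1 ≤ n) :
    (SemidirectProduct.inl (φ := lampAct p n)).range.index = 0 ∧
      ∀ W : Subgroup (Lamp p n),
        (SemidirectProduct.inl (φ := lampAct p n)).range < W → W.FiniteIndex := by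

  constructor
  · rw [SemidirectProduct.range_inl_eq_ker_rightHom, Subgroup.index_ker,
      MonoidHom.range_eq_top_of_surjective _ SemidirectProduct.rightHom_surjective]
    rw [Nat.card_congr Subgroup.topEquiv.toEquiv]
    exact Nat.card_eq_zero_of_infinite
  · intro W hW
    have hker : (SemidirectProduct.rightHom :
        Lamp p n →* Multiplicative ℤ).ker ≤ W := by
      rw [← SemidirectProduct.range_inl_eq_ker_rightHom]; exact hW.le
    have hWeq : W = (W.map SemidirectProduct.rightHom).comap
        (SemidirectProduct.rightHom :
          Lamp p n →* Multiplicative ℤ) := by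
      rw [Subgroup.comap_map_eq, sup_eq_left.2 hker]
    -- find a nontrivial element of the image
    obtain ⟨w, hwW, hwn⟩ := SetLike.exists_of_lt hW
    have hw1 : SemidirectProduct.rightHom w ≠ 1 := by
      intro h
      refine hwn ?_
      rw [SemidirectProduct.range_inl_eq_ker_rightHom]
      exact h
    have hg : SemidirectProduct.rightHom w ∈ W.map SemidirectProduct.rightHom :=
      ⟨w, hwW, rfl⟩
    set g : Multiplicative ℤ := SemidirectProduct.rightHom w
    have hzp : Subgroup.zpowers g ≤ W.map SemidirectProduct.rightHom :=
      Subgroup.zpowers_le.2 hg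
    have hidx : (Subgroup.zpowers g).index ≠ 0 := by
      have : (Subgroup.zpowers g).index = (AddSubgroup.zmultiples g.toAdd).index := rfl
      rw [this, Int.index_zmultiples]
      simpa using fun h => hw1 (by simpa [g, Multiplicative.toAdd] using h)
    have hWidx : (W.map (SemidirectProduct.rightHom :
        Lamp p n →* Multiplicative ℤ)).index ≠ 0 := by
      intro h
      exact hidx (Nat.eq_zero_of_zero_dvd (h ▸ Subgroup.index_dvd_of_le hzp))
    refine ⟨?_⟩
    rw [hWeq, Subgroup.index_comap_of_surjective _ SemidirectProduct.rightHom_surjective]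
    exact hWidx
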